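/- For every β > 0 the measure σ_β on ℝⁿ with density |x|^β satisfies σ_β(B(x,r)) ≍ r^n (|x| + r)^β, and consequently for every p > 1 the weight |x|^{-τ} belongs to A_p of the measure |x|^{2τ} dx. -/

import Mathlib

open MeasureTheory Metric
open scoped ENNReal

lemma ball_bound (n : ℕ) (hn : 1 ≤ n) (β : ℝ) (hβ : 0 < β) : ∃ C : ℝ, 0 < C ∧
    ∀ (x : EuclideanSpace ℝ (Fin n)) (r : ℝ), 0 < r →
      ENNReal.ofReal (C⁻¹ * (r ^ n * (‖x‖ + r) ^ β)) ≤
        (∫⁻ y in Metric.ball x r, ENNReal.ofReal (‖y‖ ^ β)) ∧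
      (∫⁻ y in Metric.ball x r, ENNReal.ofReal (‖y‖ ^ β)) ≤
        ENNReal.ofReal (C * (r ^ n * (‖x‖ + r) ^ β)) := by
  haveI : Nonempty (Fin n) := ⟨⟨0, hn⟩⟩
  set E := EuclideanSpace ℝ (Fin n)
  have hdim : Module.finrank ℝ E = n := finrank_euclideanSpace_fin
  set V : ℝ≥0∞ := volume (ball (0 : E) 1) with hVdef
  have hV0 : V ≠ 0 := (measure_ball_pos _ _ one_pos).ne'
  have hVt : V ≠ ∞ := measure_ball_lt_top.ne
  set v : ℝ := V.toReal with hvdef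
  have hv : 0 < v := ENNReal.toReal_pos hV0 hVt
  have hVeq : V = ENNReal.ofReal v := (ENNReal.ofReal_toReal hVt).symm
  have hvol : ∀ (z : E) (ρ : ℝ), 0 < ρ → volume (ball z ρ) = ENNReal.ofReal (ρ ^ n * v) := by
    intro z ρ hρ
    rw [Measure.addHaar_ball_of_pos _ _ hρ, hdim, ← hVdef, hVeq,
      ← ENNReal.ofReal_mul (by positivity)]
  refine ⟨max v ((4:ℝ) ^ β * 4 ^ n / v), lt_max_of_lt_left hv, fun x r hr => ?_⟩
  have hS : 0 < ‖x‖ + r := by positivity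
  constructor
  · -- lower bound
    obtain ⟨z, hz1, hz2⟩ : ∃ z : E, ‖z‖ = ‖x‖ + r / 2 ∧ ‖z - x‖ = r / 2 := by
      rcases eq_or_ne x 0 with rfl | hx
      · have hs : ‖(EuclideanSpace.single (⟨0, hn⟩ : Fin n) (r / 2) : E)‖ = r / 2 := by
          rw [EuclideanSpace.norm_single]; exact abs_of_pos (half_pos hr)
        exact ⟨EuclideanSpace.single ⟨0, hn⟩ (r / 2), by simp [hs], by simp [hs]⟩
      · have hx0 : (0:ℝ) < ‖x‖ := norm_pos_iff.2 hx
        refine ⟨(1 + r / (2 * ‖x‖)) • x, ?_, ?_⟩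
        · rw [norm_smul, Real.norm_eq_abs, abs_of_pos (by positivity)]
          field_simp
        · have : (1 + r / (2 * ‖x‖)) • x - x = (r / (2 * ‖x‖)) • x := by
            rw [add_smul, one_smul]; abel
          rw [this, norm_smul, Real.norm_eq_abs, abs_of_pos (by positivity)]
          field_simp
    have hsub : ball z (r / 4) ⊆ ball x r := by
      intro y hy
      have h1 : dist y z < r / 4 := mem_ball.1 hy
      have h2 : dist z x = r / 2 := by rw [dist_eq_norm]; exact hz2
      have := dist_triangle y z x
      rw [mem_ball]; linarith
    have hlow : ∀ y ∈ ball z (r / 4), ENNReal.ofReal (((‖x‖ + r) / 4) ^ β) ≤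
        ENNReal.ofReal (‖y‖ ^ β) := by
      intro y hy
      apply ENNReal.ofReal_le_ofReal
      apply Real.rpow_le_rpow (by positivity) _ hβ.le
      have h1 : ‖z - y‖ < r / 4 := by
        rw [← dist_eq_norm, dist_comm]; exact mem_ball.1 hy
      have h2 : ‖z‖ ≤ ‖z - y‖ + ‖y‖ := by
        simpa using norm_sub_le_norm_sub_add_norm_sub z y 0
      rw [hz1] at h2
      have hnx : (0:ℝ) ≤ ‖x‖ := norm_nonneg x
      linarith
    calc ENNReal.ofReal ((max v ((4:ℝ) ^ β * 4 ^ n / v))⁻¹ * (r ^ n * (‖x‖ + r) ^ β))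
        ≤ ENNReal.ofReal (((‖x‖ + r) / 4) ^ β * ((r / 4) ^ n * v)) := by
          apply ENNReal.ofReal_le_ofReal
          rw [Real.div_rpow hS.le (by norm_num), div_pow]
          have hle : (max v ((4:ℝ) ^ β * 4 ^ n / v))⁻¹ ≤ v / ((4:ℝ) ^ β * 4 ^ n) := by
            rw [inv_le_comm₀ (lt_max_of_lt_left hv) (by positivity), inv_div]
            exact le_max_right _ _
          have h4 : (0:ℝ) < (4:ℝ) ^ β := Real.rpow_pos_of_pos (by norm_num) β
          have hX : (0:ℝ) ≤ r ^ n * (‖x‖ + r) ^ β := by positivity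
          calc (max v ((4:ℝ) ^ β * 4 ^ n / v))⁻¹ * (r ^ n * (‖x‖ + r) ^ β)
              ≤ v / ((4:ℝ) ^ β * 4 ^ n) * (r ^ n * (‖x‖ + r) ^ β) := by gcongr
            _ = (‖x‖ + r) ^ β / 4 ^ β * (r ^ n / 4 ^ n * v) := by
                field_simp
      _ ≤ ∫⁻ y in ball z (r / 4), ENNReal.ofReal (‖y‖ ^ β) := by
          rw [ENNReal.ofReal_mul (by positivity), ← hvol z (r / 4) (by positivity)]
          calc ENNReal.ofReal (((‖x‖ + r) / 4) ^ β) * volume (ball z (r / 4))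
              = ∫⁻ _ in ball z (r / 4), ENNReal.ofReal (((‖x‖ + r) / 4) ^ β) :=
                (setLIntegral_const _ _).symm
            _ ≤ _ := setLIntegral_mono' measurableSet_ball hlow
      _ ≤ ∫⁻ y in ball x r, ENNReal.ofReal (‖y‖ ^ β) := lintegral_mono_set hsub
  · -- upper bound
    calc (∫⁻ y in ball x r, ENNReal.ofReal (‖y‖ ^ β))
        ≤ ∫⁻ _ in ball x r, ENNReal.ofReal ((‖x‖ + r) ^ β) := by
          apply setLIntegral_mono' measurableSet_ball
          intro y hy
          apply ENNReal.ofReal_le_ofReal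
          apply Real.rpow_le_rpow (norm_nonneg _) _ hβ.le
          have h1 : ‖y - x‖ < r := by rw [← dist_eq_norm]; exact mem_ball.1 hy
          have := norm_sub_le_norm_sub_add_norm_sub y x 0
          simp at this
          linarith
      _ = ENNReal.ofReal ((‖x‖ + r) ^ β) * volume (ball x r) := setLIntegral_const _ _
      _ ≤ ENNReal.ofReal (max v ((4:ℝ) ^ β * 4 ^ n / v) * (r ^ n * (‖x‖ + r) ^ β)) := by
          rw [hvol x r hr, ← ENNReal.ofReal_mul (by positivity)]
          apply ENNReal.ofReal_le_ofReal
          calc (‖x‖ + r) ^ β * (r ^ n * v) = v * (r ^ n * (‖x‖ + r) ^ β) := by ring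
            _ ≤ _ := by gcongr; exact le_max_left _ _

/-- For every `β > 0` the measure `σ_β` on `ℝⁿ` with density `|x|^β` satisfies
`σ_β(B(x,r)) ≍ rⁿ (|x|+r)^β`; consequently for every `p > 1` the weight `|x|^{−τ}`
belongs to `A_p` of the measure `dν = |x|^{2τ} dx`. -/
theorem stmt14 (n : ℕ) (hn : 1 ≤ n) (τ : ℝ) (hτ : 0 < τ)
    (ν : Measure (EuclideanSpace ℝ (Fin n)))
    (hν : ν = volume.withDensity fun y => ENNReal.ofReal (‖y‖ ^ (2 * τ))) :
    (∀ β : ℝ, 0 < β → ∃ C : ℝ, 0 < C ∧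
      ∀ (x : EuclideanSpace ℝ (Fin n)) (r : ℝ), 0 < r →
        ENNReal.ofReal (C⁻¹ * (r ^ n * (‖x‖ + r) ^ β)) ≤
          (∫⁻ y in Metric.ball x r, ENNReal.ofReal (‖y‖ ^ β)) ∧
        (∫⁻ y in Metric.ball x r, ENNReal.ofReal (‖y‖ ^ β)) ≤
          ENNReal.ofReal (C * (r ^ n * (‖x‖ + r) ^ β))) ∧
    (∀ p : ℝ, 1 < p → ∃ C : ℝ≥0∞, C ≠ ∞ ∧
      ∀ (x : EuclideanSpace ℝ (Fin n)) (r : ℝ), 0 < r →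
        ((ν (Metric.ball x r))⁻¹ *
            ∫⁻ y in Metric.ball x r, ENNReal.ofReal (‖y‖ ^ (-τ)) ∂ν) *
          ((ν (Metric.ball x r))⁻¹ *
            ∫⁻ y in Metric.ball x r,
              (ENNReal.ofReal (‖y‖ ^ (-τ))) ^ (-(1 / (p - 1))) ∂ν) ^ (p - 1) ≤ C) := by
  refine ⟨fun β hβ => ball_bound n hn β hβ, fun p hp => ?_⟩
  set E := EuclideanSpace ℝ (Fin n)
  have hp1 : 0 < p - 1 := by linarith
  set β₃ : ℝ := 2 * τ + τ / (p - 1) with hβ₃def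
  have hβ₃ : 0 < β₃ := by positivity
  obtain ⟨C₁, hC₁, H₁⟩ := ball_bound n hn τ hτ
  obtain ⟨C₂, hC₂, H₂⟩ := ball_bound n hn (2 * τ) (by positivity)
  obtain ⟨C₃, hC₃, H₃⟩ := ball_bound n hn β₃ hβ₃
  refine ⟨ENNReal.ofReal (C₁ * C₂ * (C₂ * C₃) ^ (p - 1)), ENNReal.ofReal_ne_top,
    fun x r hr => ?_⟩
  set S : ℝ := ‖x‖ + r with hSdef
  have hS : 0 < S := by positivity
  have hB : MeasurableSet (ball x r) := measurableSet_ball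
  have hdens : Measurable fun y : E => ENNReal.ofReal (‖y‖ ^ (2 * τ)) :=
    (ENNReal.continuous_ofReal.comp
      (continuous_norm.rpow_const fun y => Or.inr (by positivity))).measurable
  have hfin : ∀ᵐ y ∂(volume.restrict (ball x r)),
      ENNReal.ofReal (‖y‖ ^ (2 * τ)) < ∞ := ae_of_all _ fun y => ENNReal.ofReal_lt_top
  -- measure of the ball
  have hA : ν (ball x r) = ∫⁻ y in ball x r, ENNReal.ofReal (‖y‖ ^ (2 * τ)) := by
    rw [hν, withDensity_apply _ hB]
  -- first integral
  have hI1 : (∫⁻ y in ball x r, ENNReal.ofReal (‖y‖ ^ (-τ)) ∂ν)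
      = ∫⁻ y in ball x r, ENNReal.ofReal (‖y‖ ^ τ) := by
    rw [hν, setLIntegral_withDensity_eq_setLIntegral_mul_non_measurable _ hdens _ hB hfin]
    apply lintegral_congr
    intro y
    simp only [Pi.mul_apply]
    rw [← ENNReal.ofReal_mul (by positivity)]
    congr 1
    rcases (norm_nonneg y).eq_or_lt with h | h
    · rw [← h, Real.zero_rpow (by positivity : (0:ℝ) < 2 * τ).ne', Real.zero_rpow hτ.ne',
        Real.zero_rpow (neg_ne_zero.2 hτ.ne'), mul_zero]
    · rw [← Real.rpow_add h]
      congr 1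
      ring
  -- third integral
  have hI3 : (∫⁻ y in ball x r,
        (ENNReal.ofReal (‖y‖ ^ (-τ))) ^ (-(1 / (p - 1))) ∂ν)
      = ∫⁻ y in ball x r, ENNReal.ofReal (‖y‖ ^ β₃) := by
    rw [hν, setLIntegral_withDensity_eq_setLIntegral_mul_non_measurable _ hdens _ hB hfin]
    apply lintegral_congr
    intro y
    simp only [Pi.mul_apply]
    rcases (norm_nonneg y).eq_or_lt with h | h
    · rw [← h, Real.zero_rpow (by positivity : (0:ℝ) < 2 * τ).ne',
        Real.zero_rpow hβ₃.ne']
      simp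
    · have hpos : 0 < ‖y‖ ^ (-τ) := Real.rpow_pos_of_pos h _
      rw [ENNReal.ofReal_rpow_of_pos hpos, ← ENNReal.ofReal_mul (by positivity)]
      congr 1
      rw [← Real.rpow_mul h.le, ← Real.rpow_add h]
      congr 1
      rw [hβ₃def]
      field_simp
  obtain ⟨h1l, h1u⟩ := H₁ x r hr
  obtain ⟨h2l, h2u⟩ := H₂ x r hr
  obtain ⟨h3l, h3u⟩ := H₃ x r hr
  have hb2 : (0:ℝ) < C₂⁻¹ * (r ^ n * S ^ (2 * τ)) := by positivity
  have hAinv : (ν (ball x r))⁻¹ ≤ ENNReal.ofReal ((C₂⁻¹ * (r ^ n * S ^ (2 * τ)))⁻¹) := by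
    rw [ENNReal.ofReal_inv_of_pos hb2]
    exact ENNReal.inv_le_inv.2 (hA ▸ h2l)
  have hSτ : (0:ℝ) < S ^ τ := Real.rpow_pos_of_pos hS τ
  have h2S : S ^ (2 * τ) = S ^ τ * S ^ τ := by rw [two_mul, Real.rpow_add hS]
  have hnegS : S ^ (-τ) = (S ^ τ)⁻¹ := Real.rpow_neg hS.le τ
  have hSd : (0:ℝ) < S ^ (τ / (p - 1)) := Real.rpow_pos_of_pos hS _
  have h3S : S ^ β₃ = S ^ (2 * τ) * S ^ (τ / (p - 1)) := by
    rw [hβ₃def, Real.rpow_add hS]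
  -- first factor bound
  have hf1 : (ν (ball x r))⁻¹ * (∫⁻ y in ball x r, ENNReal.ofReal (‖y‖ ^ (-τ)) ∂ν)
      ≤ ENNReal.ofReal (C₁ * C₂ * S ^ (-τ)) := by
    rw [hI1]
    calc (ν (ball x r))⁻¹ * (∫⁻ y in ball x r, ENNReal.ofReal (‖y‖ ^ τ))
        ≤ ENNReal.ofReal ((C₂⁻¹ * (r ^ n * S ^ (2 * τ)))⁻¹) *
          ENNReal.ofReal (C₁ * (r ^ n * S ^ τ)) := mul_le_mul' hAinv h1u
      _ = ENNReal.ofReal ((C₂⁻¹ * (r ^ n * S ^ (2 * τ)))⁻¹ * (C₁ * (r ^ n * S ^ τ))) :=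
          (ENNReal.ofReal_mul (by positivity)).symm
      _ = ENNReal.ofReal (C₁ * C₂ * S ^ (-τ)) := by
          congr 1
          rw [h2S, hnegS]
          have hrn : (0:ℝ) < r ^ n := by positivity
          field_simp
  -- second factor bound
  have hf2 : (ν (ball x r))⁻¹ *
      (∫⁻ y in ball x r, (ENNReal.ofReal (‖y‖ ^ (-τ))) ^ (-(1 / (p - 1))) ∂ν)
      ≤ ENNReal.ofReal (C₂ * C₃ * S ^ (τ / (p - 1))) := by
    rw [hI3]
    calc (ν (ball x r))⁻¹ * (∫⁻ y in ball x r, ENNReal.ofReal (‖y‖ ^ β₃))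
        ≤ ENNReal.ofReal ((C₂⁻¹ * (r ^ n * S ^ (2 * τ)))⁻¹) *
          ENNReal.ofReal (C₃ * (r ^ n * S ^ β₃)) := mul_le_mul' hAinv h3u
      _ = ENNReal.ofReal ((C₂⁻¹ * (r ^ n * S ^ (2 * τ)))⁻¹ * (C₃ * (r ^ n * S ^ β₃))) :=
          (ENNReal.ofReal_mul (by positivity)).symm
      _ = ENNReal.ofReal (C₂ * C₃ * S ^ (τ / (p - 1))) := by
          congr 1
          rw [h3S]
          have hrn : (0:ℝ) < r ^ n := by positivity
          have hS2 : (0:ℝ) < S ^ (2 * τ) := Real.rpow_pos_of_pos hS _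
          field_simp
  calc ((ν (ball x r))⁻¹ * ∫⁻ y in ball x r, ENNReal.ofReal (‖y‖ ^ (-τ)) ∂ν) *
        ((ν (ball x r))⁻¹ *
          ∫⁻ y in ball x r, (ENNReal.ofReal (‖y‖ ^ (-τ))) ^ (-(1 / (p - 1))) ∂ν) ^ (p - 1)
      ≤ ENNReal.ofReal (C₁ * C₂ * S ^ (-τ)) *
        (ENNReal.ofReal (C₂ * C₃ * S ^ (τ / (p - 1)))) ^ (p - 1) :=
        mul_le_mul' hf1 (ENNReal.rpow_le_rpow hf2 hp1.le)
    _ = ENNReal.ofReal (C₁ * C₂ * (C₂ * C₃) ^ (p - 1)) := by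
        rw [ENNReal.ofReal_rpow_of_pos (by positivity),
          ← ENNReal.ofReal_mul (by positivity)]
        congr 1
        rw [Real.mul_rpow (by positivity) hSd.le, ← Real.rpow_mul hS.le,
          div_mul_cancel₀ τ hp1.ne']
        rw [hnegS]
        field_simp
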